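/- arXiv:1109.1910 — 3 statements merged into one kernel-verified Lean document; each statement's English description precedes it below -/
import Mathlib

section
/- If x : [0,T] → ℝ is a C² function with ẋ(0) = v₀ < c and satisfies ẍ(t) = (1 - ẋ(t)/c)·G(t) - k(t)·ẋ(t) where G(t) ≥ 0 whenever ẋ(t) ≤ c, and k(t) > 0 for all t, then ẋ(t) ≤ c for all t ∈ [0,T]. -/
open Set

/-- If `x` is `C²` with `ẋ 0 = v₀ < c` and satisfies
`ẍ t = (1 - ẋ t / c) * G t - k t * ẋ t` on `[0,T]`, where `G t ≥ 0` whenever `ẋ t ≤ c`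
and `k t > 0`, then `ẋ t ≤ c` on `[0,T]`. -/
theorem stmt0 (T c v₀ : ℝ) (hT : 0 ≤ T) (hc : 0 < c) (hv₀ : v₀ < c)
    (x G k : ℝ → ℝ) (hx : ContDiff ℝ 2 x)
    (hG : Continuous G) (hk : Continuous k)
    (hx0 : deriv x 0 = v₀)
    (hode : ∀ t ∈ Icc 0 T,
      deriv (deriv x) t = (1 - deriv x t / c) * G t - k t * deriv x t)
    (hGpos : ∀ t ∈ Icc 0 T, deriv x t ≤ c → 0 ≤ G t)
    (hkpos : ∀ t ∈ Icc 0 T, 0 < k t) :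
    ∀ t ∈ Icc 0 T, deriv x t ≤ c := by
  set v := deriv x with hvdef
  have hx2 : ContDiff ℝ ((1 : ℕ) + 1) x := by exact_mod_cast hx
  have hv1 : ContDiff ℝ 1 v := (contDiff_succ_iff_deriv.mp hx2).2.2
  have hvdiff : Differentiable ℝ v := hv1.differentiable one_ne_zero
  have hvcont : Continuous v := hvdiff.continuous
  by_contra hcon
  push_neg at hcon
  obtain ⟨s, hsmem, hs⟩ := hcon
  -- the set of times in [0,T] where v ≥ c
  set S : Set ℝ := Icc 0 T ∩ v ⁻¹' Ici c with hSdef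
  have hSne : S.Nonempty := ⟨s, hsmem, le_of_lt hs⟩
  have hSclosed : IsClosed S := isClosed_Icc.inter (isClosed_Ici.preimage hvcont)
  have hSbdd : BddBelow S := ⟨0, fun t ht => ht.1.1⟩
  set t₀ := sInf S with ht₀def
  have ht₀S : t₀ ∈ S := hSclosed.csInf_mem hSne hSbdd
  have ht₀Icc : t₀ ∈ Icc 0 T := ht₀S.1
  have hvt₀ : c ≤ v t₀ := ht₀S.2
  have ht₀pos : 0 < t₀ := by
    rcases lt_or_eq_of_le ht₀Icc.1 with h | h
    · exact h
    · exfalso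
      have : v 0 = v₀ := hx0
      rw [← h] at hvt₀
      linarith [hvt₀, this ▸ hvt₀]
  -- before t₀, v < c
  have hbefore : ∀ t ∈ Ioo (0 : ℝ) t₀, v t < c := by
    intro t ht
    by_contra hge
    push_neg at hge
    have htS : t ∈ S := ⟨⟨le_of_lt ht.1, le_trans (le_of_lt ht.2) ht₀Icc.2⟩, hge⟩
    exact absurd (csInf_le hSbdd htS) (not_le.mpr ht.2)
  -- hence v t₀ ≤ c by continuity, so v t₀ = c
  have hIoo_mem : Ioo (0 : ℝ) t₀ ∈ nhdsWithin t₀ (Iio t₀) :=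
    Ioo_mem_nhdsLT_of_mem ⟨ht₀pos, le_refl t₀⟩
  have hNeBot : (nhdsWithin t₀ (Iio t₀)).NeBot := nhdsLT_neBot t₀
  have hvle : v t₀ ≤ c := by
    have htend : Filter.Tendsto v (nhdsWithin t₀ (Iio t₀)) (nhds (v t₀)) :=
      (hvcont.continuousAt).continuousWithinAt
    refine le_of_tendsto htend ?_
    filter_upwards [hIoo_mem] with t ht
    exact le_of_lt (hbefore t ht)
  have hveq : v t₀ = c := le_antisymm hvle hvt₀
  -- derivative of v at t₀ is ≥ 0 (limit of nonneg slopes from the left)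
  have hd : HasDerivAt v (deriv v t₀) t₀ := (hvdiff t₀).hasDerivAt
  have hslope : Filter.Tendsto (slope v t₀) (nhdsWithin t₀ {t₀}ᶜ) (nhds (deriv v t₀)) :=
    hasDerivAt_iff_tendsto_slope.mp hd
  have hslope' : Filter.Tendsto (slope v t₀) (nhdsWithin t₀ (Iio t₀)) (nhds (deriv v t₀)) :=
    hslope.mono_left (nhdsWithin_mono t₀ (fun y hy => ne_of_lt hy))
  have hderiv_nonneg : 0 ≤ deriv v t₀ := by
    refine ge_of_tendsto hslope' ?_
    filter_upwards [hIoo_mem] with t ht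
    have h1 : v t - v t₀ < 0 := by
      have := hbefore t ht
      rw [hveq]; linarith
    have h2 : t - t₀ < 0 := sub_neg.mpr ht.2
    have : 0 ≤ (v t - v t₀) / (t - t₀) := div_nonneg_iff.mpr (Or.inr ⟨le_of_lt h1, le_of_lt h2⟩)
    simpa [slope_def_field, div_eq_iff] using this
  -- but the ODE gives deriv v t₀ = -k t₀ * c < 0
  have hODE := hode t₀ ht₀Icc
  rw [hveq] at hODE
  have hkt := hkpos t₀ ht₀Icc
  have : deriv v t₀ = -(k t₀ * c) := by
    rw [hODE]; field_simp; ring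
  nlinarith [mul_pos hkt hc]
end

section
/- If x : [0,T] → ℝ is a C² function with x(0) = 0, ẋ(0) = v₀ ∈ [0,c), satisfying ẍ(t) = (1 - ẋ(t)/c)·G(t,ẋ(t)) - k(t)·ẋ(t), where G(t,v) ≥ 0 for v ≤ c, G(t,v) = 0 for v ≥ c, and k(t) > 0, then 0 ≤ ẋ(t) ≤ c and hence 0 ≤ x(t) ≤ c·t for all t ∈ [0,T]. -/
open Set

lemma barrier (f : ℝ → ℝ) (a b : ℝ) (hab : a ≤ b) (hf : Differentiable ℝ f)
    (h0 : 0 ≤ f a) (hcond : ∀ t, a < t → t ≤ b → f t < 0 → 0 < deriv f t) :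
    0 ≤ f b := by
  by_contra hb
  push_neg at hb
  set A := Icc a b ∩ {t : ℝ | 0 ≤ f t} with hA
  have hA_ne : A.Nonempty := ⟨a, ⟨le_rfl, hab⟩, h0⟩
  have hA_bdd : BddAbove A := ⟨b, fun t ht => ht.1.2⟩
  have hA_closed : IsClosed A :=
    isClosed_Icc.inter (isClosed_le continuous_const hf.continuous)
  set t₁ := sSup A with ht₁
  have ht₁A : t₁ ∈ A := hA_closed.csSup_mem hA_ne hA_bdd
  have hft₁ : 0 ≤ f t₁ := ht₁A.2
  have ht₁b : t₁ < b := lt_of_le_of_ne ht₁A.1.2 (fun h => by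
    have := ht₁A.2; rw [h] at this; exact absurd hb (not_lt.mpr this))
  obtain ⟨ξ, hξ, hslope⟩ := exists_deriv_eq_slope f ht₁b
    (hf.continuous.continuousOn) (hf.differentiableOn)
  have hξA : ξ ∉ A := fun h => absurd (le_csSup hA_bdd h) (not_le.mpr hξ.1)
  have hfξ : f ξ < 0 := by
    by_contra h
    exact hξA ⟨⟨ht₁A.1.1.trans hξ.1.le, hξ.2.le⟩, not_lt.mp h⟩
  have hd : 0 < deriv f ξ :=
    hcond ξ (lt_of_le_of_lt ht₁A.1.1 hξ.1) (hξ.2.le) hfξ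
  rw [hslope] at hd
  have hbt : 0 < b - t₁ := sub_pos.mpr ht₁b
  have hmul := mul_pos hd hbt
  rw [div_mul_cancel₀ _ (ne_of_gt hbt)] at hmul
  linarith

/-- If `x` is `C²` with `x 0 = 0`, `ẋ 0 = v₀ ∈ [0,c)`, and
`ẍ t = (1 - ẋ t / c) * G (t, ẋ t) - k t * ẋ t` on `[0,T]`, where `G t v ≥ 0` for `v ≤ c`,
`G t v = 0` for `v ≥ c` and `k > 0`, then `0 ≤ ẋ t ≤ c` and hence `0 ≤ x t ≤ c * t`. -/
theorem stmt1 (T c v₀ : ℝ) (hT : 0 ≤ T) (hc : 0 < c)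
    (hv₀ : 0 ≤ v₀) (hv₀' : v₀ < c)
    (x : ℝ → ℝ) (G : ℝ → ℝ → ℝ) (k : ℝ → ℝ)
    (hx : ContDiff ℝ 2 x) (hG : Continuous (Function.uncurry G)) (hk : Continuous k)
    (hx00 : x 0 = 0) (hx0 : deriv x 0 = v₀)
    (hode : ∀ t ∈ Icc 0 T,
      deriv (deriv x) t = (1 - deriv x t / c) * G t (deriv x t) - k t * deriv x t)
    (hGpos : ∀ t ∈ Icc 0 T, ∀ v : ℝ, v ≤ c → 0 ≤ G t v)
    (hGzero : ∀ t ∈ Icc 0 T, ∀ v : ℝ, c ≤ v → G t v = 0)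
    (hkpos : ∀ t ∈ Icc 0 T, 0 < k t) :
    ∀ t ∈ Icc 0 T, (0 ≤ deriv x t ∧ deriv x t ≤ c) ∧ (0 ≤ x t ∧ x t ≤ c * t) := by
  have hx2 : ContDiff ℝ (1 + 1) x := by exact_mod_cast hx
  have hxd : Differentiable ℝ x := hx.differentiable (by norm_num)
  have hv : ContDiff ℝ 1 (deriv x) := (contDiff_succ_iff_deriv.mp hx2).2.2
  have hvd : Differentiable ℝ (deriv x) := hv.differentiable (by norm_num)
  -- lower bound for v
  have hlow : ∀ t ∈ Icc 0 T, 0 ≤ deriv x t := by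
    intro t ht
    refine barrier (deriv x) 0 t ht.1 hvd (by rw [hx0]; exact hv₀) ?_
    intro s hs0 hst hfs
    have hsI : s ∈ Icc 0 T := ⟨hs0.le, hst.trans ht.2⟩
    rw [hode s hsI]
    have hG0 : 0 ≤ G s (deriv x s) := hGpos s hsI _ (hfs.le.trans hc.le)
    have h1 : (0:ℝ) < 1 - deriv x s / c := by
      have : deriv x s / c < 0 := div_neg_of_neg_of_pos hfs hc
      linarith
    have hk0 := hkpos s hsI
    nlinarith
  -- upper bound for v
  have hupp : ∀ t ∈ Icc 0 T, deriv x t ≤ c := by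
    intro t ht
    have : 0 ≤ c - deriv x t := by
      refine barrier (fun s => c - deriv x s) 0 t ht.1
        ((differentiable_const c).sub hvd) (by simp [hx0]; linarith) ?_
      intro s hs0 hst hfs
      have hsI : s ∈ Icc 0 T := ⟨hs0.le, hst.trans ht.2⟩
      have hderiv : deriv (fun s => c - deriv x s) s = -deriv (deriv x) s := by
        simp [deriv_const_sub]
      rw [hderiv, hode s hsI]
      have hfs : c - deriv x s < 0 := hfs
      have hvc : c < deriv x s := by linarith
      rw [hGzero s hsI _ hvc.le]
      have hk0 := hkpos s hsI
      nlinarith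
    linarith
  -- monotonicity for x
  have hmono : MonotoneOn x (Icc 0 T) := by
    apply monotoneOn_of_deriv_nonneg (convex_Icc 0 T) hxd.continuous.continuousOn
      (hxd.differentiableOn.mono interior_subset)
    intro s hs
    rw [interior_Icc] at hs
    exact hlow s ⟨hs.1.le, hs.2.le⟩
  have hmono2 : MonotoneOn (fun s => c * s - x s) (Icc 0 T) := by
    have hcont : Continuous (fun s : ℝ => c * s - x s) := by fun_prop
    have hdiff : Differentiable ℝ (fun s : ℝ => c * s - x s) := by fun_prop
    apply monotoneOn_of_deriv_nonneg (convex_Icc 0 T) hcont.continuousOn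
      (hdiff.differentiableOn.mono interior_subset)
    intro s hs
    rw [interior_Icc] at hs
    have h1 : HasDerivAt (fun s : ℝ => c * s - x s) (c * 1 - deriv x s) s := by
      exact (((hasDerivAt_id s).const_mul c).sub (hxd s).hasDerivAt)
    rw [h1.deriv]
    have := hupp s ⟨hs.1.le, hs.2.le⟩
    linarith
  intro t ht
  refine ⟨⟨hlow t ht, hupp t ht⟩, ?_, ?_⟩
  · have := hmono ⟨le_rfl, hT⟩ ht ht.1
    rwa [hx00] at this
  · have := hmono2 ⟨le_rfl, hT⟩ ht ht.1
    simp only [mul_zero, hx00, sub_zero] at this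
    linarith
end

section
/- Supersolution construction via boundary distance: let Ω ⊂ ℝ³ be C² and X₁-periodic, and suppose d : Ω̄ → [0,∞) is a bounded X₁-periodic C² function with bounded first and second derivatives such that Dd·N ≤ -1 on ∂Ω. Then for any bounded continuous data, there exist constants k₁, k₂, k₃ ≥ 0 such that wₑ(x,t) = k₁ + k₂t + k₃(ε‖d‖_∞ - ε d(x/ε)) satisfies: (i) on the boundary, χ ∂wₑ/∂n ≥ k₃χ whenever k₃ is large enough, dominating the bounded production term; (ii) in the interior, ∂wₑ/∂t - εχΔwₑ + c·Dwₑ ≥ k₂ - C(k₃) with C(k₃) independent of ε for k₂ large; (iii) wₑ ≥ u₀ at x₁ = 0 for k₁ large. Consequently wₑ is a supersolution of the nutrient problem uniformly in ε. -/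
open Set MeasureTheory Pointwise

noncomputable section

abbrev E3 := EuclideanSpace ℝ (Fin 3)

def lap3 (f : E3 → ℝ) (x : E3) : ℝ :=
  ∑ i : Fin 3, fderiv ℝ (fun y => fderiv ℝ f y (EuclideanSpace.single i 1)) x
    (EuclideanSpace.single i 1)

lemma aux_fderiv_smul (a : ℝ) (g : E3 → ℝ) (hg : Differentiable ℝ g) (x v : E3) :
    fderiv ℝ (fun y => g (a • y)) x v = a * fderiv ℝ g (a • x) v := by
  have hL : HasFDerivAt (fun y : E3 => a • y) (a • ContinuousLinearMap.id ℝ E3) x :=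
    (a • ContinuousLinearMap.id ℝ E3).hasFDerivAt
  have h : HasFDerivAt (fun y => g (a • y))
      ((fderiv ℝ g (a • x)).comp (a • ContinuousLinearMap.id ℝ E3)) x :=
    (hg (a • x)).hasFDerivAt.comp x hL
  rw [h.fderiv]
  simp [mul_comm]

lemma aux_fderiv_affine (C k : ℝ) (h : E3 → ℝ) (x : E3) (hh : DifferentiableAt ℝ h x) :
    fderiv ℝ (fun y => C + k * h y) x = k • fderiv ℝ h x :=
  ((hh.hasFDerivAt.const_mul k).const_add C).fderiv

lemma aux_diff_inner (g : E3 → ℝ) (hg : ContDiff ℝ 2 g) (v : E3) :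
    Differentiable ℝ (fun z => fderiv ℝ g z v) := by
  have h1 : ContDiff ℝ 1 (fderiv ℝ g) := hg.fderiv_right (by norm_num)
  exact (ContinuousLinearMap.apply ℝ ℝ v).differentiable.comp (h1.differentiable one_ne_zero)

lemma aux_lap (a k C : ℝ) (g : E3 → ℝ) (hg : ContDiff ℝ 2 g) (x : E3) :
    lap3 (fun y => C + k * g (a • y)) x = k * (a * a) * lap3 g (a • x) := by
  have hg1 : Differentiable ℝ g := hg.differentiable (by norm_num)
  have hsm : Differentiable ℝ (fun y : E3 => a • y) := differentiable_id.const_smul a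
  have hga : Differentiable ℝ (fun y => g (a • y)) := hg1.comp hsm
  unfold lap3
  rw [Finset.mul_sum]
  refine Finset.sum_congr rfl fun i _ => ?_
  set v := EuclideanSpace.single (𝕜 := ℝ) i (1:ℝ) with hv
  have hFd : Differentiable ℝ (fun z => fderiv ℝ g z v) := aux_diff_inner g hg v
  have hFda : Differentiable ℝ (fun y => fderiv ℝ g (a • y) v) := hFd.comp hsm
  have key : (fun y => fderiv ℝ (fun y' => C + k * g (a • y')) y v)
      = fun y => 0 + (k * a) * fderiv ℝ g (a • y) v := by
    funext y
    rw [aux_fderiv_affine C k _ y (hga y)]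
    simp only [ContinuousLinearMap.smul_apply, smul_eq_mul]
    rw [aux_fderiv_smul a g hg1 y v]
    ring
  rw [key, aux_fderiv_affine 0 (k * a) _ x (hFda x)]
  simp only [ContinuousLinearMap.smul_apply, smul_eq_mul]
  rw [aux_fderiv_smul a _ hFd x v]
  ring

/-- Supersolution construction via a boundary-defining function: if `d` is a bounded
`X₁`-periodic `C²` function with bounded derivatives and `Dd·N ≤ -1` on `∂Ω`, then
there are constants `k₁, k₂, k₃ ≥ 0` such that
`w(x,t) = k₁ + k₂ t + k₃ (ε‖d‖_∞ - ε d(x/ε))` is a supersolution of the nutrient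
problem uniformly in `ε`: (i) its boundary flux `χ ∂w/∂n ≥ k₃ χ ≥ B` dominates the
bounded production term, (ii) `∂w/∂t - εχΔw + c·Dw ≥ B` in the interior,
(iii) `w ≥ u₀` at `x₁ = 0`. -/
theorem stmt13 (T ε χ : ℝ) (hT : 0 < T) (hε : 0 < ε) (hχ : 0 < χ)
    (Ω : Set E3) (hΩ : IsOpen Ω)
    (e₁ : E3) (he₁ : e₁ = EuclideanSpace.single 0 1)
    (hper : ∀ X : E3, X ∈ Ω ↔ X + e₁ ∈ Ω)
    (N : E3 → E3) (hNunit : ∀ X ∈ frontier Ω, ‖N X‖ = 1)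
    (d : E3 → ℝ) (hd : ContDiff ℝ 2 d)
    (hdper : ∀ X : E3, d (X + e₁) = d X)
    (D₀ D₁ D₂ : ℝ)
    (hd0 : ∀ X, 0 ≤ d X ∧ d X ≤ D₀)
    (hd1 : ∀ X (w : E3), |fderiv ℝ d X w| ≤ D₁ * ‖w‖)
    (hd2 : ∀ X, |lap3 d X| ≤ D₂)
    (hdN : ∀ X ∈ frontier Ω, fderiv ℝ d X (N X) ≤ -1)
    (Ωε : Set E3) (hΩε : Ωε = (ε • Ω) ∩ {x : E3 | 0 ≤ x 0})
    (c : E3 → ℝ → E3) (Cc : ℝ) (hc : ∀ x t, ‖c x t‖ ≤ Cc)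
    (B : ℝ) (hB : 0 ≤ B)
    (u₀ : ℝ → ℝ) (hu₀ : ∀ t ∈ Icc 0 T, |u₀ t| ≤ B) :
    ∃ k₁ k₂ k₃ : ℝ, 0 ≤ k₁ ∧ 0 ≤ k₂ ∧ 0 ≤ k₃ ∧
      (∀ w : E3 → ℝ → ℝ,
        (w = fun x t => k₁ + k₂ * t + k₃ * (ε * D₀ - ε * d (ε⁻¹ • x))) →
        -- (i) boundary flux domination
        (∀ x ∈ frontier Ωε, 0 < x 0 → ∀ t ∈ Icc 0 T,
          k₃ * χ ≤ χ * fderiv ℝ (fun y => w y t) x (N (ε⁻¹ • x)) ∧ B ≤ k₃ * χ) ∧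
        -- (ii) interior supersolution inequality
        (∀ x ∈ Ωε, ∀ t ∈ Icc 0 T,
          B ≤ deriv (w x) t - ε * χ * lap3 (fun y => w y t) x
                + fderiv ℝ (fun y => w y t) x (c x t)) ∧
        -- (iii) domination of the Dirichlet data at the pylorus
        (∀ x : E3, x 0 = 0 → ∀ t ∈ Icc 0 T, u₀ t ≤ w x t)) := by
  have hd1' : Differentiable ℝ d := hd.differentiable (by norm_num)
  have hD₁ : 0 ≤ D₁ := by
    have := hd1 0 (EuclideanSpace.single 0 1)
    have h1 : ‖EuclideanSpace.single (𝕜 := ℝ) (0 : Fin 3) (1:ℝ)‖ = 1 := by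
      simp [EuclideanSpace.norm_single]
    nlinarith [abs_nonneg (fderiv ℝ d 0 (EuclideanSpace.single (𝕜 := ℝ) (0 : Fin 3) (1:ℝ)))]
  have hD₂ : 0 ≤ D₂ := le_trans (abs_nonneg _) (hd2 0)
  have hCc : 0 ≤ Cc := le_trans (norm_nonneg _) (hc 0 0)
  set k₃ : ℝ := B / χ with hk₃
  have hk₃0 : 0 ≤ k₃ := div_nonneg hB hχ.le
  set k₂ : ℝ := B + k₃ * (χ * D₂ + D₁ * Cc) with hk₂
  have hk₂0 : 0 ≤ k₂ := by positivity
  refine ⟨B, k₂, k₃, hB, hk₂0, hk₃0, ?_⟩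
  intro w hw
  -- general fderiv formula for w(·,t)
  have hwfun : ∀ t, (fun y => w y t)
      = fun y => (B + k₂ * t + k₃ * (ε * D₀)) + (-(k₃ * ε)) * d (ε⁻¹ • y) := by
    intro t; funext y; rw [hw]; ring
  have hdiffcomp : Differentiable ℝ (fun y => d (ε⁻¹ • y)) :=
    hd1'.comp (differentiable_id.const_smul (ε⁻¹ : ℝ) : Differentiable ℝ (fun y : E3 => ε⁻¹ • y))
  have hfd : ∀ t x v, fderiv ℝ (fun y => w y t) x v
      = -k₃ * fderiv ℝ d (ε⁻¹ • x) v := by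
    intro t x v
    rw [hwfun t, aux_fderiv_affine _ _ _ x (hdiffcomp x)]
    rw [ContinuousLinearMap.smul_apply, smul_eq_mul, aux_fderiv_smul _ _ hd1' x v]
    field_simp
  have hlap : ∀ t x, lap3 (fun y => w y t) x = -(k₃ * ε⁻¹) * lap3 d (ε⁻¹ • x) := by
    intro t x
    rw [hwfun t, aux_lap ε⁻¹ (-(k₃ * ε)) _ d hd x]
    field_simp
  refine ⟨?_, ?_, ?_⟩
  · -- (i)
    intro x hx hx0 t _
    -- x/ε ∈ frontier Ω
    have hxS : x ∈ interior {y : E3 | 0 ≤ y 0} := by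
      have hopen : IsOpen {y : E3 | 0 < y 0} :=
        isOpen_lt continuous_const (by fun_prop)
      have hsub : {y : E3 | 0 < y 0} ⊆ interior {y : E3 | 0 ≤ y 0} :=
        interior_maximal (Set.setOf_subset_setOf.mpr fun y => le_of_lt) hopen
      exact hsub hx0
    have hxf : x ∈ frontier (ε • Ω) := by
      rw [hΩε] at hx
      rcases frontier_inter_subset (ε • Ω) {y : E3 | 0 ≤ y 0} hx with h | h
      · exact h.1
      · exact absurd hxS h.2.2
    have hz : ε⁻¹ • x ∈ frontier Ω := by
      have h1 : x ∈ ε • closure Ω := by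
        rw [← closure_smul₀' hε.ne']
        exact frontier_subset_closure hxf
      have h2 : x ∉ interior (ε • Ω) := fun hmem => hxf.2 hmem
      constructor
      · rcases h1 with ⟨z, hz1, rfl⟩
        simpa [smul_smul, inv_mul_cancel₀ hε.ne'] using hz1
      · intro hcon
        apply h2
        rw [interior_smul₀ hε.ne']
        exact ⟨ε⁻¹ • x, hcon, by simp [smul_smul, mul_inv_cancel₀ hε.ne']⟩
    have hN := hdN _ hz
    rw [hfd t x (N (ε⁻¹ • x))]
    constructor
    · have h1 : k₃ * fderiv ℝ d (ε⁻¹ • x) (N (ε⁻¹ • x)) ≤ -k₃ := by nlinarith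
      nlinarith [mul_le_mul_of_nonneg_left h1 hχ.le]
    · rw [hk₃]; field_simp; exact le_rfl
  · -- (ii)
    intro x _ t _
    have hder : deriv (w x) t = k₂ := by
      have : w x = fun s => B + k₂ * s + k₃ * (ε * D₀ - ε * d (ε⁻¹ • x)) := by
        funext s; rw [hw]
      rw [this]
      have h1 : HasDerivAt (fun s : ℝ => B + k₂ * s + k₃ * (ε * D₀ - ε * d (ε⁻¹ • x)))
          (k₂ * 1) t := (((hasDerivAt_id t).const_mul k₂).const_add B).add_const _
      simpa using h1.deriv
    rw [hder, hlap t x, hfd t x (c x t)]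
    have hA : |fderiv ℝ d (ε⁻¹ • x) (c x t)| ≤ D₁ * Cc := by
      calc |fderiv ℝ d (ε⁻¹ • x) (c x t)| ≤ D₁ * ‖c x t‖ := hd1 _ _
        _ ≤ D₁ * Cc := by nlinarith [hc x t]
    have hL : |lap3 d (ε⁻¹ • x)| ≤ D₂ := hd2 _
    have hsimp : ε * χ * (-(k₃ * ε⁻¹) * lap3 d (ε⁻¹ • x))
        = -(χ * k₃ * lap3 d (ε⁻¹ • x)) := by
      field_simp
    rw [hsimp]
    rw [abs_le] at hA hL
    rw [hk₂]
    nlinarith [hL.1, hL.2, hA.1, hA.2, mul_nonneg hχ.le hk₃0]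
  · -- (iii)
    intro x _ t ht
    rw [hw]
    have h0 := (hd0 (ε⁻¹ • x)).2
    have hu := hu₀ t ht
    rw [abs_le] at hu
    have ht0 : 0 ≤ t := ht.1
    nlinarith [mul_nonneg hk₂0 ht0, mul_nonneg hk₃0 (mul_nonneg hε.le (sub_nonneg.mpr h0))]

end
end
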